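/- Let H be a complex Hilbert space and A a bounded self-adjoint linear operator on H. Let φ, ψ : ℝ → ℂ be continuous even functions such that |φ| and |ψ| are strictly increasing on (0,∞) and |φ(t)|/|ψ(t)| is non-increasing on (0,∞). Fix b > 0 and let N(b) be as defined. Then for every x ∈ H, ‖φ(A)x‖ ≤ (|φ(b)|/|ψ(b)|)·‖ψ(A)x‖ + N(b)·‖x‖. -/

import Mathlib

/-- The truncation `φ_b(t) = φ(t) − (φ(b)/ψ(b))·ψ(t)` for `|t| ≤ b`, `0` otherwise. -/
noncomputable def phib (φ ψ : ℝ → ℂ) (b : ℝ) : ℝ → ℂ :=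
  fun t => if |t| ≤ b then φ t - (φ b / ψ b) * ψ t else 0

/-- `N(b) = sup_{t ∈ ℝ} |φ_b(t)|`. -/
noncomputable def Nb (φ ψ : ℝ → ℂ) (b : ℝ) : ℝ :=
  ⨆ t : ℝ, ‖phib φ ψ b t‖

lemma norm_sq_cfc_eq {H : Type*} [NormedAddCommGroup H] [InnerProductSpace ℂ H] [CompleteSpace H]
    (A : H →L[ℂ] H) (hA : IsSelfAdjoint A) (f : ℝ → ℂ) (hf : Continuous f) (x : H) :
    ‖cfc (fun z : ℂ => f z.re) A x‖ ^ 2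
      = Complex.re (inner ℂ x (cfc (fun z : ℂ => ((‖f z.re‖ ^ 2 : ℝ) : ℂ)) A x)) := by
  have hN : IsStarNormal A := hA.isStarNormal
  have hcont : ContinuousOn (fun z : ℂ => f z.re) (spectrum ℂ A) :=
    (hf.comp Complex.continuous_re).continuousOn
  set T := cfc (fun z : ℂ => f z.re) A with hT
  have h1 : cfc (fun z : ℂ => ((‖f z.re‖ ^ 2 : ℝ) : ℂ)) A = star T * T := by
    rw [hT, ← cfc_star (fun z : ℂ => f z.re) A,
      ← cfc_mul _ _ A (hcont.star) hcont]
    apply cfc_congr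
    intro z _
    show ((‖f z.re‖ ^ 2 : ℝ) : ℂ) = star (f z.re) * f z.re
    rw [Complex.star_def, mul_comm, Complex.mul_conj]
    norm_cast
    rw [Complex.normSq_eq_norm_sq]
  rw [h1, ContinuousLinearMap.mul_apply, ContinuousLinearMap.star_eq_adjoint,
    ContinuousLinearMap.adjoint_inner_right]
  exact (inner_self_eq_norm_sq (𝕜 := ℂ) (T x)).symm

lemma cfc_inner_nonneg {H : Type*} [NormedAddCommGroup H] [InnerProductSpace ℂ H]
    [CompleteSpace H] (A : H →L[ℂ] H) (hA : IsSelfAdjoint A)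
    (u : ℝ → ℝ) (hu : Continuous u) (hu0 : ∀ t, 0 ≤ u t) (x : H) :
    0 ≤ Complex.re (inner ℂ x (cfc (fun z : ℂ => ((u z.re : ℝ) : ℂ)) A x)) := by
  have key := norm_sq_cfc_eq A hA (fun t => ((Real.sqrt (u t) : ℝ) : ℂ))
    (Complex.continuous_ofReal.comp (Real.continuous_sqrt.comp hu)) x
  have heq : (fun z : ℂ => ((‖((Real.sqrt (u z.re) : ℝ) : ℂ)‖ ^ 2 : ℝ) : ℂ))
      = fun z : ℂ => ((u z.re : ℝ) : ℂ) := by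
    funext z
    rw [Complex.norm_real, Real.norm_eq_abs, abs_of_nonneg (Real.sqrt_nonneg _),
      Real.sq_sqrt (hu0 _)]
  rw [heq] at key
  rw [← key]
  positivity

/-- **Additive Hardy–Littlewood–Pólya type inequality for functions of a
self-adjoint operator.** Here `g(A)` is encoded via the continuous functional
calculus of the self-adjoint operator `A` applied to `z ↦ g(Re z)`. For every
`x ∈ H`, `‖φ(A)x‖ ≤ (|φ(b)|/|ψ(b)|)·‖ψ(A)x‖ + N(b)·‖x‖`. -/
theorem additive_hlp_for_operator_functions
    {H : Type*} [NormedAddCommGroup H] [InnerProductSpace ℂ H] [CompleteSpace H]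
    (A : H →L[ℂ] H) (hA : IsSelfAdjoint A)
    (φ ψ : ℝ → ℂ) (hφc : Continuous φ) (hψc : Continuous ψ)
    (hφe : ∀ t : ℝ, φ (-t) = φ t) (hψe : ∀ t : ℝ, ψ (-t) = ψ t)
    (hφm : StrictMonoOn (fun t => ‖φ t‖) (Set.Ioi (0 : ℝ)))
    (hψm : StrictMonoOn (fun t => ‖ψ t‖) (Set.Ioi (0 : ℝ)))
    (hratio : AntitoneOn (fun t => ‖φ t‖ / ‖ψ t‖) (Set.Ioi (0 : ℝ)))
    (b : ℝ) (hb : 0 < b) :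
    ∀ x : H,
      ‖cfc (fun z : ℂ => φ z.re) A x‖
        ≤ (‖φ b‖ / ‖ψ b‖) * ‖cfc (fun z : ℂ => ψ z.re) A x‖ + Nb φ ψ b * ‖x‖ := by
  intro x
  have hN : IsStarNormal A := hA.isStarNormal
  set c : ℝ := ‖φ b‖ / ‖ψ b‖ with hc
  -- ψ b ≠ 0
  have hψb : 0 < ‖ψ b‖ :=
    lt_of_le_of_lt (norm_nonneg (ψ (b / 2)))
      (hψm (Set.mem_Ioi.mpr (by linarith)) (Set.mem_Ioi.mpr hb) (by linarith))
  have hψbne : ψ b ≠ 0 := by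
    intro h; rw [h, norm_zero] at hψb; exact lt_irrefl 0 hψb
  have hc0 : 0 ≤ c := div_nonneg (norm_nonneg _) (norm_nonneg _)
  -- set up `ρ`
  set ρ : ℝ → ℂ := fun t => if |t| ≤ b then (φ b / ψ b) * ψ t else φ t with hρ
  have hset : {t : ℝ | |t| ≤ b} = Set.Icc (-b) b := by
    ext t; simp [abs_le]
  have hfront : ∀ t ∈ frontier {t : ℝ | |t| ≤ b}, (φ b / ψ b) * ψ t = φ t := by
    intro t ht
    rw [hset, frontier_Icc (by linarith : -b ≤ b)] at ht
    rcases ht with rfl | rfl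
    · rw [hψe, hφe, div_mul_cancel₀ _ hψbne]
    · rw [div_mul_cancel₀ _ hψbne]
  have hρc : Continuous ρ :=
    Continuous.if (fun t ht => hfront t ht) (continuous_const.mul hψc) hφc
  have hpc : Continuous (phib φ ψ b) := by
    apply Continuous.if
    · intro t ht
      rw [sub_eq_zero.mpr (hfront t ht).symm]
    · exact hφc.sub (continuous_const.mul hψc)
    · exact continuous_const
  -- pointwise bound ‖ρ t‖ ≤ c * ‖ψ t‖
  have habs : ∀ t : ℝ, φ |t| = φ t ∧ ψ |t| = ψ t := by
    intro t
    rcases le_or_gt 0 t with h | h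
    · rw [abs_of_nonneg h]; exact ⟨rfl, rfl⟩
    · rw [abs_of_neg h]; exact ⟨hφe t, hψe t⟩
  have hρb : ∀ t : ℝ, ‖ρ t‖ ≤ c * ‖ψ t‖ := by
    intro t
    rw [hρ]
    by_cases ht : |t| ≤ b
    · simp only [ht, if_pos]
      rw [norm_mul, norm_div]
    · simp only [ht, if_neg, not_false_iff]
      have hbt : b < |t| := not_le.mp ht
      have htpos : (0:ℝ) < |t| := lt_trans hb hbt
      have hψt : 0 < ‖ψ t‖ := by
        have := hψm (Set.mem_Ioi.mpr hb) (Set.mem_Ioi.mpr htpos) hbt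
        simp only at this
        rw [(habs t).2] at this
        exact lt_trans hψb this
      have hr := hratio (Set.mem_Ioi.mpr hb) (Set.mem_Ioi.mpr htpos) (le_of_lt hbt)
      simp only at hr
      rw [(habs t).1, (habs t).2] at hr
      calc ‖φ t‖ = (‖φ t‖ / ‖ψ t‖) * ‖ψ t‖ := (div_mul_cancel₀ _ (ne_of_gt hψt)).symm
        _ ≤ c * ‖ψ t‖ := mul_le_mul_of_nonneg_right hr (norm_nonneg _)
  -- decomposition φ = ρ + phib
  have hdec : (fun z : ℂ => φ z.re)
      = fun z : ℂ => ρ z.re + phib φ ψ b z.re := by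
    funext z
    rw [hρ, phib]
    by_cases hz : |z.re| ≤ b <;> simp [hz]
  -- bound on Nb
  obtain ⟨t₀, ht₀, hM⟩ := (isCompact_Icc (a := -b) (b := b)).exists_isMaxOn
    (Set.nonempty_Icc.mpr (by linarith)) (hpc.norm.continuousOn)
  have hMglob : ∀ t : ℝ, ‖phib φ ψ b t‖ ≤ ‖phib φ ψ b t₀‖ := by
    intro t
    by_cases ht : |t| ≤ b
    · exact hM (hset ▸ ht)
    · have : phib φ ψ b t = 0 := by rw [phib]; simp [ht]
      rw [this, norm_zero]
      exact norm_nonneg _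
  have hbdd : BddAbove (Set.range fun t => ‖phib φ ψ b t‖) := ⟨_, by
    rintro - ⟨t, rfl⟩; exact hMglob t⟩
  have hNb_ge : ∀ t : ℝ, ‖phib φ ψ b t‖ ≤ Nb φ ψ b := fun t => le_ciSup hbdd t
  have hNb0 : 0 ≤ Nb φ ψ b := le_trans (norm_nonneg _) (hNb_ge 0)
  -- continuity facts
  have hρcc : ContinuousOn (fun z : ℂ => ρ z.re) (spectrum ℂ A) :=
    (hρc.comp Complex.continuous_re).continuousOn
  have hpcc : ContinuousOn (fun z : ℂ => phib φ ψ b z.re) (spectrum ℂ A) :=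
    ((hpc.comp Complex.continuous_re)).continuousOn
  -- split the operator
  have hsplit : cfc (fun z : ℂ => φ z.re) A
      = cfc (fun z : ℂ => ρ z.re) A + cfc (fun z : ℂ => phib φ ψ b z.re) A := by
    rw [hdec]
    exact cfc_add A _ _ hρcc hpcc
  -- bound the phib part
  have hPhib : ‖cfc (fun z : ℂ => phib φ ψ b z.re) A x‖ ≤ Nb φ ψ b * ‖x‖ := by
    calc ‖cfc (fun z : ℂ => phib φ ψ b z.re) A x‖
        ≤ ‖cfc (fun z : ℂ => phib φ ψ b z.re) A‖ * ‖x‖ :=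
          ContinuousLinearMap.le_opNorm _ _
      _ ≤ Nb φ ψ b * ‖x‖ := by
          apply mul_le_mul_of_nonneg_right _ (norm_nonneg x)
          exact norm_cfc_le hNb0 (fun z _ => hNb_ge z.re)
  -- bound the ρ part
  have hRho : ‖cfc (fun z : ℂ => ρ z.re) A x‖ ≤ c * ‖cfc (fun z : ℂ => ψ z.re) A x‖ := by
    have key1 := norm_sq_cfc_eq A hA ρ hρc x
    have key2 := norm_sq_cfc_eq A hA ψ hψc x
    set u : ℝ → ℝ := fun t => c ^ 2 * ‖ψ t‖ ^ 2 - ‖ρ t‖ ^ 2 with hu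
    have hu0 : ∀ t, 0 ≤ u t := by
      intro t
      rw [hu]
      have h1 : ‖ρ t‖ ^ 2 ≤ (c * ‖ψ t‖) ^ 2 :=
        pow_le_pow_left₀ (norm_nonneg _) (hρb t) 2
      rw [mul_pow] at h1
      dsimp only
      linarith
    have huc : Continuous u := by
      apply Continuous.sub
      · exact continuous_const.mul ((hψc.norm).pow 2)
      · exact (hρc.norm).pow 2
    have hpos := cfc_inner_nonneg A hA u huc hu0 x
    -- rewrite cfc u A as combination
    have hsplit2 : cfc (fun z : ℂ => ((u z.re : ℝ) : ℂ)) A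
        = (c ^ 2 : ℂ) • cfc (fun z : ℂ => ((‖ψ z.re‖ ^ 2 : ℝ) : ℂ)) A
          - cfc (fun z : ℂ => ((‖ρ z.re‖ ^ 2 : ℝ) : ℂ)) A := by
      have h1 : (fun z : ℂ => ((u z.re : ℝ) : ℂ))
          = fun z : ℂ => (c ^ 2 : ℂ) * ((‖ψ z.re‖ ^ 2 : ℝ) : ℂ)
              - ((‖ρ z.re‖ ^ 2 : ℝ) : ℂ) := by
        funext z; rw [hu]; push_cast; ring
      rw [h1, cfc_sub _ _ A ?_ ?_, cfc_const_mul _ _ A ?_]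
      · exact (Complex.continuous_ofReal.comp ((hψc.norm.pow 2).comp
          Complex.continuous_re)).continuousOn
      · exact (continuous_const.mul (Complex.continuous_ofReal.comp ((hψc.norm.pow 2).comp
          Complex.continuous_re))).continuousOn
      · exact (Complex.continuous_ofReal.comp ((hρc.norm.pow 2).comp
          Complex.continuous_re)).continuousOn
    rw [hsplit2] at hpos
    simp only [ContinuousLinearMap.sub_apply, ContinuousLinearMap.smul_apply,
      inner_sub_right, inner_smul_right, Complex.sub_re] at hpos
    have hre : ((c:ℂ) ^ 2 * inner ℂ x (cfc (fun z : ℂ => ((‖ψ z.re‖ ^ 2 : ℝ) : ℂ)) A x)).re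
        = c ^ 2 * Complex.re (inner ℂ x (cfc (fun z : ℂ => ((‖ψ z.re‖ ^ 2 : ℝ) : ℂ)) A x)) := by
      rw [show ((c:ℂ) ^ 2) = ((c ^ 2 : ℝ) : ℂ) by push_cast; ring, Complex.re_ofReal_mul]
    rw [hre, ← key1, ← key2] at hpos
    have hsq : ‖cfc (fun z : ℂ => ρ z.re) A x‖ ^ 2
        ≤ (c * ‖cfc (fun z : ℂ => ψ z.re) A x‖) ^ 2 := by
      rw [mul_pow]; linarith
    have := Real.sqrt_le_sqrt hsq
    rwa [Real.sqrt_sq (norm_nonneg _), Real.sqrt_sq (by positivity)] at this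
  calc ‖cfc (fun z : ℂ => φ z.re) A x‖
      = ‖cfc (fun z : ℂ => ρ z.re) A x + cfc (fun z : ℂ => phib φ ψ b z.re) A x‖ := by
        rw [hsplit]; rfl
    _ ≤ ‖cfc (fun z : ℂ => ρ z.re) A x‖ + ‖cfc (fun z : ℂ => phib φ ψ b z.re) A x‖ :=
        norm_add_le _ _
    _ ≤ c * ‖cfc (fun z : ℂ => ψ z.re) A x‖ + Nb φ ψ b * ‖x‖ := add_le_add hRho hPhib
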